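/- Let E ⊆ [n]×[n] with |E| = k, suppose E has more than √(3/2)·k^{2/3} distinct rows, every pair of rows of E intersects, and every row of E contains fewer than (3/2)·k^{1/3} elements of E. Then some column of E contains at least (3/2)·k^{1/3} elements of E. -/

import Mathlib

/-- If `E ⊆ [n]×[n]` has `k` elements, more than `√(3/2)·k^{2/3}` distinct rows, every two
rows of `E` intersect, and every row of `E` contains fewer than `(3/2)·k^{1/3}` elements of
`E`, then some column of `E` contains at least `(3/2)·k^{1/3}` elements of `E`. -/
theorem stmt12 {n k : ℕ} (E : Finset (Fin n × Fin n)) (hE : E.card = k)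
    (hrows : Real.sqrt (3 / 2) * (k : ℝ) ^ ((2 : ℝ) / 3) < ((E.image Prod.fst).card : ℝ))
    (hint : ∀ i i' : Fin n, (∃ j, (i, j) ∈ E) → (∃ j, (i', j) ∈ E) →
      ∃ j, (i, j) ∈ E ∧ (i', j) ∈ E)
    (hshort : ∀ i ∈ E.image Prod.fst,
      ((E.filter (fun p => p.1 = i)).card : ℝ) < 3 / 2 * (k : ℝ) ^ ((1 : ℝ) / 3)) :
    ∃ j : Fin n, 3 / 2 * (k : ℝ) ^ ((1 : ℝ) / 3) ≤
      ((E.filter (fun p => p.2 = j)).card : ℝ) := by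
  classical
  by_contra hcon
  push_neg at hcon
  -- k = 0 is impossible
  rcases Nat.eq_zero_or_pos k with hk0 | hk0
  · subst hk0
    rw [Finset.card_eq_zero] at hE
    subst hE
    norm_num [Real.zero_rpow] at hrows
  have hk : (0 : ℝ) < k := by exact_mod_cast hk0
  set rows := E.image Prod.fst with hrowsdef
  have hEne : E.Nonempty := Finset.card_pos.mp (hE ▸ hk0)
  have hrne : rows.Nonempty := hEne.image _
  -- choose the shortest row i₀
  obtain ⟨i₀, hi₀, hmin⟩ := Finset.exists_min_image rows
    (fun i => (E.filter (fun p => p.1 = i)).card) hrne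
  have hsum : ∑ i ∈ rows, (E.filter (fun p => p.1 = i)).card = k := by
    rw [← hE]
    exact (Finset.card_eq_sum_card_fiberwise
      (fun p hp => Finset.mem_image_of_mem Prod.fst hp)).symm
  have hRk : rows.card * (E.filter (fun p => p.1 = i₀)).card ≤ k := by
    calc rows.card * (E.filter (fun p => p.1 = i₀)).card
        = ∑ _i ∈ rows, (E.filter (fun p => p.1 = i₀)).card := by
          rw [Finset.sum_const, smul_eq_mul]
      _ ≤ ∑ i ∈ rows, (E.filter (fun p => p.1 = i)).card :=
          Finset.sum_le_sum fun i hi => hmin i hi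
      _ = k := hsum
  set cols := (E.filter (fun p => p.1 = i₀)).image Prod.snd with hcolsdef
  have hcolsle : cols.card ≤ (E.filter (fun p => p.1 = i₀)).card := Finset.card_image_le
  have hcolsne : cols.Nonempty := by
    apply Finset.Nonempty.image
    obtain ⟨p, hp, hpi⟩ := Finset.mem_image.mp hi₀
    exact ⟨p, Finset.mem_filter.mpr ⟨hp, hpi⟩⟩
  -- every row contains a point in one of i₀'s columns
  have hrow2col : ∀ i : Fin n, ∃ j : Fin n, i ∈ rows → j ∈ cols ∧ (i, j) ∈ E := by
    intro i
    by_cases hi : i ∈ rows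
    · obtain ⟨p, hp, hpi⟩ := Finset.mem_image.mp hi
      obtain ⟨q, hq, hqi⟩ := Finset.mem_image.mp hi₀
      have hp' : (i, p.2) ∈ E := by rw [← hpi]; simpa using hp
      have hq' : (i₀, q.2) ∈ E := by rw [← hqi]; simpa using hq
      obtain ⟨j, hj1, hj2⟩ := hint i i₀ ⟨p.2, hp'⟩ ⟨q.2, hq'⟩
      exact ⟨j, fun _ => ⟨Finset.mem_image.mpr
        ⟨(i₀, j), Finset.mem_filter.mpr ⟨hj2, rfl⟩, rfl⟩, hj1⟩⟩
    · exact ⟨i, fun h => absurd h hi⟩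
  choose f hf using hrow2col
  -- rows inject into the points lying in i₀'s columns
  have hRle : rows.card ≤ (E.filter (fun p => p.2 ∈ cols)).card := by
    apply Finset.card_le_card_of_injOn (fun i => (i, f i))
    · intro i hi
      exact Finset.mem_filter.mpr ⟨(hf i hi).2, (hf i hi).1⟩
    · intro a _ b _ h
      exact (Prod.mk.injEq _ _ _ _).mp h |>.1
  have hfib : (E.filter (fun p => p.2 ∈ cols)).card
      ≤ ∑ j ∈ cols, (E.filter (fun p => p.2 = j)).card := by
    rw [Finset.card_eq_sum_card_fiberwise
      (f := Prod.snd) (s := E.filter (fun p => p.2 ∈ cols)) (t := cols) (fun p hp => (Finset.mem_filter.mp hp).2)]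
    apply Finset.sum_le_sum
    intro j _
    apply Finset.card_le_card
    intro p hp
    simp only [Finset.mem_filter] at hp ⊢
    exact ⟨hp.1.1, hp.2⟩
  -- real-number bookkeeping
  set t : ℝ := 3 / 2 * (k : ℝ) ^ ((1 : ℝ) / 3) with ht
  have ht0 : 0 < t := by positivity
  have hsumlt : (∑ j ∈ cols, ((E.filter (fun p => p.2 = j)).card : ℝ))
      < cols.card * t := by
    calc (∑ j ∈ cols, ((E.filter (fun p => p.2 = j)).card : ℝ))
        < ∑ _j ∈ cols, t := Finset.sum_lt_sum_of_nonempty hcolsne fun j _ => hcon j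
      _ = cols.card * t := by rw [Finset.sum_const, nsmul_eq_mul]
  have hR1 : (1 : ℝ) ≤ (rows.card : ℝ) := by
    exact_mod_cast Nat.one_le_iff_ne_zero.mpr (Finset.card_ne_zero_of_mem hi₀)
  have h1 : (rows.card : ℝ) < (cols.card : ℝ) * t := by
    refine lt_of_le_of_lt ?_ hsumlt
    have := hRle.trans hfib
    calc (rows.card : ℝ) ≤ ((∑ j ∈ cols, (E.filter (fun p => p.2 = j)).card : ℕ) : ℝ) := by
          exact_mod_cast this
      _ = ∑ j ∈ cols, ((E.filter (fun p => p.2 = j)).card : ℝ) := by push_cast; ring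
  have h2 : (cols.card : ℝ) ≤ ((E.filter (fun p => p.1 = i₀)).card : ℝ) := by
    exact_mod_cast hcolsle
  have h3 : (rows.card : ℝ) * ((E.filter (fun p => p.1 = i₀)).card : ℝ) ≤ (k : ℝ) := by
    exact_mod_cast hRk
  -- algebraic identities
  have hsq : (Real.sqrt (3 / 2) * (k : ℝ) ^ ((2 : ℝ) / 3)) ^ 2
      = 3 / 2 * (k : ℝ) ^ ((4 : ℝ) / 3) := by
    rw [mul_pow, Real.sq_sqrt (by norm_num : (0:ℝ) ≤ 3/2),
      ← Real.rpow_natCast ((k : ℝ) ^ ((2 : ℝ) / 3)) 2, ← Real.rpow_mul hk.le]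
    norm_num
  have htk : t * (k : ℝ) = 3 / 2 * (k : ℝ) ^ ((4 : ℝ) / 3) := by
    rw [ht, mul_assoc]
    congr 1
    calc (k : ℝ) ^ ((1 : ℝ) / 3) * (k : ℝ)
        = (k : ℝ) ^ ((1 : ℝ) / 3) * (k : ℝ) ^ (1 : ℝ) := by rw [Real.rpow_one]
      _ = (k : ℝ) ^ ((1 : ℝ) / 3 + 1) := (Real.rpow_add hk _ _).symm
      _ = (k : ℝ) ^ ((4 : ℝ) / 3) := by norm_num
  have hsqlt : 3 / 2 * (k : ℝ) ^ ((4 : ℝ) / 3) < (rows.card : ℝ) ^ 2 := by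
    rw [← hsq]
    exact pow_lt_pow_left₀ hrows (by positivity) (by norm_num)
  -- put it together
  have hRpos : (0 : ℝ) < (rows.card : ℝ) := lt_of_lt_of_le one_pos hR1
  have c1 : (rows.card : ℝ) * (rows.card : ℝ)
      < ((E.filter (fun p => p.1 = i₀)).card * t) * rows.card := by
    refine lt_of_lt_of_le (mul_lt_mul_of_pos_right h1 hRpos) ?_
    exact mul_le_mul_of_nonneg_right (mul_le_mul_of_nonneg_right h2 ht0.le) hRpos.le
  have c3 : t * ((rows.card : ℝ) * ((E.filter (fun p => p.1 = i₀)).card : ℝ)) ≤ t * k :=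
    mul_le_mul_of_nonneg_left h3 ht0.le
  nlinarith [sq_nonneg ((rows.card : ℝ))]
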